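/- The functional L_{(n_k)} is bounded on ΛBV^{(p)} with bound 2: for every f : [0,1] → ℝ with V_{Λ,p}(f) < ∞, |L_{(n_k)}(f)| ≤ ‖f‖_{Λ,p}·(1 + ‖h‖_{Λ,q}) ≤ 2‖f‖_{Λ,p}, where ‖f‖_{Λ,p} := |f(0)| + V_{Λ,p}(f). -/

import Mathlib

open Filter Set
open scoped ENNReal Classical

noncomputable section

/-- `Λ = （λ_i)_{i≥1}` is a Waterman sequence: positive, nondecreasing, `λ_1 = 1`,
and `∑ 1/λ_i = ∞`. -/
def WatermanSeq (lam : ℕ → ℝ) : Prop :=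
  (∀ i, 0 < lam i) ∧ Monotone lam ∧ lam 1 = 1 ∧
    Tendsto (fun n => ∑ i ∈ Finset.Icc 1 n, 1 / lam i) atTop atTop

/-- `Λ(M) = ∑_{i=1}^{M} 1/λ_i`. -/
def LamSum (lam : ℕ → ℝ) (M : ℕ) : ℝ := ∑ i ∈ Finset.Icc 1 M, 1 / lam i

/-- `{[a i, b i]}_{i < m}` is a finite family of pairwise non-overlapping closed
subintervals of `[0,1]`. -/
def NonOverlapping (m : ℕ) (a b : ℕ → ℝ) : Prop :=
  (∀ i < m, 0 ≤ a i ∧ a i ≤ b i ∧ b i ≤ 1) ∧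
    ∀ i < m, ∀ j < m, i ≠ j → b i ≤ a j ∨ b j ≤ a i

/-- `(∑_{i=1}^m |f(I_i)|^s / λ_i)^{1/s}` for the family `I_i = [a i, b i]`. -/
def vSum (lam : ℕ → ℝ) (s : ℝ) (f : ℝ → ℝ) (m : ℕ) (a b : ℕ → ℝ) : ℝ :=
  (∑ i ∈ Finset.range m, |f (b i) - f (a i)| ^ s / lam (i + 1)) ^ (1 / s)

/-- The `s`-`Λ`-variation `V_{Λ,s}(f)`, an element of `[0,∞]`. -/
def variation (lam : ℕ → ℝ) (s : ℝ) (f : ℝ → ℝ) : ℝ≥0∞ :=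
  ⨆ (m : ℕ) (a : ℕ → ℝ) (b : ℕ → ℝ) (_ : NonOverlapping m a b),
    ENNReal.ofReal (vSum lam s f m a b)

/-- `M_n = 2^(3n-1)`. -/
def Mseq (n : ℕ) : ℕ := 2 ^ (3 * n - 1)

/-- `b_{n,j} = 2^{-n} + (2j-2)/2^{4n}`. -/
def bb (n j : ℕ) : ℝ := ((2 : ℝ) ^ n)⁻¹ + (2 * (j : ℝ) - 2) / 2 ^ (4 * n)

/-- `c_{n,j} = 2^{-n} + (2j-1)/2^{4n}`. -/
def cc (n j : ℕ) : ℝ := ((2 : ℝ) ^ n)⁻¹ + (2 * (j : ℝ) - 1) / 2 ^ (4 * n)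

/-- The function `h_n`. -/
def hfun (lam : ℕ → ℝ) (q : ℝ) (n : ℕ) (y : ℝ) : ℝ :=
  if ∃ j, 1 ≤ j ∧ j ≤ (Mseq n - 2) / 2 ∧ y ∈ Set.Ico (bb n j) (cc n j) then
    ((2 : ℝ) ^ n)⁻¹ * LamSum lam (Mseq n) ^ (-(1 / q))
  else 0

/-- `h = ∑_{n=2}^∞ h_n`. -/
def hh (lam : ℕ → ℝ) (q : ℝ) (y : ℝ) : ℝ := ∑' n : ℕ, hfun lam q (n + 2) y

/-- The sequence `r`: `r_{2k} = c_{k+2,(M_{k+2}-2)/2}`, `r_{2k+1} = b_{k+2,(M_{k+2}-2)/2}`. -/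
def rr (i : ℕ) : ℝ :=
  if i % 2 = 0 then cc (i / 2 + 2) ((Mseq (i / 2 + 2) - 2) / 2)
  else bb (i / 2 + 2) ((Mseq (i / 2 + 2) - 2) / 2)

/-- `f(J_i) = f(r_{i-1}) - f(r_i)` where `J_i = [r_i, r_{i-1}]` (for `i ≥ 1`). -/
def incrJ (f : ℝ → ℝ) (i : ℕ) : ℝ := f (rr (i - 1)) - f (rr i)

/-- `p_{(n_k)}(j) = (-1)^{k+1}` if `j = n_k` for some `k ≥ 1`, and `0` otherwise. -/
def psgn (nseq : ℕ → ℕ) (j : ℕ) : ℝ :=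
  if h : ∃ k, 1 ≤ k ∧ nseq k = j then (-1 : ℝ) ^ (h.choose + 1) else 0

/-- The `j`-th (here `j = m+1`, `m : ℕ`) term of the series defining `L_{(n_k)}`:
`p_{(n_k)}(j) ∑_{i=1}^2 (-1)^i f(J_{2(j-1)+i}) |h(J_{2(j-1)+i})| / λ_{2(j-1)+i}`. -/
def Lterm (lam : ℕ → ℝ) (q : ℝ) (nseq : ℕ → ℕ) (f : ℝ → ℝ) (m : ℕ) : ℝ :=
  psgn nseq (m + 1) * ∑ i ∈ Finset.Icc 1 2,
    (-1 : ℝ) ^ i * incrJ f (2 * m + i) * |incrJ (hh lam q) (2 * m + i)| / lam (2 * m + i)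

/-- The functional `L_{(n_k)}(f) = f(J') + ∑_{j=1}^∞ (…)`, with `J' = [3/8, 3/8 + 2⁻⁸]`. -/
def Lfun (lam : ℕ → ℝ) (q : ℝ) (nseq : ℕ → ℕ) (f : ℝ → ℝ) : ℝ :=
  (f (3 / 8 + 1 / 2 ^ 8) - f (3 / 8)) + ∑' m : ℕ, Lterm lam q nseq f m

/-- The tent function `f_l`. -/
def tent (nseq : ℕ → ℕ) (l : ℕ) (x : ℝ) : ℝ :=
  if 3 / 8 < x ∧ x ≤ 3 / 8 + 1 / 2 ^ 8 then psgn nseq l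
  else if rr (2 * l) ≤ x ∧ x ≤ rr (2 * l - 1) then
    (x - rr (2 * l)) / (rr (2 * l - 1) - rr (2 * l))
  else if rr (2 * l - 1) ≤ x ∧ x ≤ rr (2 * l - 2) then
    (rr (2 * l - 2) - x) / (rr (2 * l - 2) - rr (2 * l - 1))
  else 0

section Aux

variable {lam : ℕ → ℝ} {p q : ℝ}

/-! ### Basic facts about `LamSum` -/

lemma lamSum_nonneg (hlam : WatermanSeq lam) (M : ℕ) : 0 ≤ LamSum lam M :=
  Finset.sum_nonneg fun i _ => by have := hlam.1 i; positivity

lemma one_le_lamSum (hlam : WatermanSeq lam) {M : ℕ} (hM : 1 ≤ M) : 1 ≤ LamSum lam M := by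
  have h1 : (1 : ℕ) ∈ Finset.Icc 1 M := by simp [hM]
  have := Finset.single_le_sum (f := fun i => 1 / lam i)
    (fun i _ => by have := hlam.1 i; positivity) h1
  unfold LamSum
  simpa [hlam.2.2.1] using this

lemma lamSum_mono (hlam : WatermanSeq lam) {M M' : ℕ} (h : M ≤ M') :
    LamSum lam M ≤ LamSum lam M' := by
  apply Finset.sum_le_sum_of_subset_of_nonneg
  · exact Finset.Icc_subset_Icc_right h
  · intro i _ _; have := hlam.1 i; positivity

lemma lamSum_pos (hlam : WatermanSeq lam) {M : ℕ} (hM : 1 ≤ M) : 0 < LamSum lam M :=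
  lt_of_lt_of_le one_pos (one_le_lamSum hlam hM)

lemma sum_inv_lam_le_card (hlam : WatermanSeq lam) (S : Finset ℕ) :
    ∑ i ∈ S, 1 / lam (i + 1) ≤ LamSum lam S.card := by
  induction S using Finset.induction_on_max with
  | empty => simp [LamSum]
  | insert a s ha ih =>
    have hanotin : a ∉ s := fun h => lt_irrefl a (ha a h)
    have hcard : (insert a s).card = s.card + 1 := Finset.card_insert_of_notMem hanotin
    have hsub : s ⊆ Finset.range a := fun x hx => Finset.mem_range.2 (ha x hx)
    have hcle : s.card ≤ a := le_trans (Finset.card_le_card hsub) (by simp)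
    rw [Finset.sum_insert hanotin, hcard]
    have hstep : LamSum lam (s.card + 1) = LamSum lam s.card + 1 / lam (s.card + 1) := by
      unfold LamSum
      rw [Finset.sum_Icc_succ_top (by omega : 1 ≤ s.card + 1)]
    rw [hstep]
    have h1 : 1 / lam (a + 1) ≤ 1 / lam (s.card + 1) := by
      apply one_div_le_one_div_of_le (hlam.1 _)
      exact hlam.2.1 (by omega)
    linarith [ih]

lemma sum_inv_lam_le (hlam : WatermanSeq lam) {S : Finset ℕ} {M : ℕ} (h : S.card ≤ M) :
    ∑ i ∈ S, 1 / lam (i + 1) ≤ LamSum lam M :=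
  le_trans (sum_inv_lam_le_card hlam S) (lamSum_mono hlam h)

/-! ### Basic facts about `bb`, `cc`, `Mseq` -/

lemma mseq_ge (n : ℕ) (hn : 2 ≤ n) : 32 ≤ Mseq n := by
  have : 5 ≤ 3 * n - 1 := by omega
  calc (32 : ℕ) = 2 ^ 5 := by norm_num
  _ ≤ 2 ^ (3 * n - 1) := Nat.pow_le_pow_right (by norm_num) this

lemma bb_le_cc (n j : ℕ) : bb n j ≤ cc n j := by
  unfold bb cc
  have : (0:ℝ) < 2 ^ (4*n) := by positivity
  gcongr
  linarith

lemma inv_le_bb {n j : ℕ} (hj : 1 ≤ j) : ((2:ℝ) ^ n)⁻¹ ≤ bb n j := by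
  unfold bb
  have hj' : (1:ℝ) ≤ (j:ℝ) := by exact_mod_cast hj
  have h2 : (0:ℝ) < 2 ^ (4*n) := by positivity
  have := div_nonneg (by linarith : (0:ℝ) ≤ 2*(j:ℝ)-2) h2.le
  linarith

lemma inv_lt_cc {n j : ℕ} (hj : 1 ≤ j) : ((2:ℝ) ^ n)⁻¹ < cc n j := by
  unfold cc
  have hj' : (1:ℝ) ≤ (j:ℝ) := by exact_mod_cast hj
  have h2 : (0:ℝ) < 2 ^ (4*n) := by positivity
  have := div_pos (by linarith : (0:ℝ) < 2*(j:ℝ)-1) h2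
  linarith

lemma cc_le {n j : ℕ} (hn : 1 ≤ n) (hj : j ≤ (Mseq n - 2) / 2) :
    cc n j ≤ ((2:ℝ) ^ n)⁻¹ + ((2:ℝ) ^ (n+1))⁻¹ := by
  unfold cc
  have h2j : 2 * j ≤ Mseq n := by
    have := (Nat.le_div_iff_mul_le (by norm_num : 0 < 2)).1 hj
    omega
  have h2j' : 2 * (j:ℝ) ≤ (Mseq n : ℝ) := by exact_mod_cast h2j
  have hM : (Mseq n : ℝ) = 2 ^ (3*n-1) := by unfold Mseq; push_cast; ring
  have key : (2 * (j:ℝ) - 1) / 2 ^ (4*n) ≤ ((2:ℝ) ^ (n+1))⁻¹ := by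
    rw [div_le_iff₀ (by positivity)]
    have h1 : ((2:ℝ) ^ (n+1))⁻¹ * 2 ^ (4*n) = 2 ^ (3*n-1) := by
      rw [inv_mul_eq_div, eq_comm, eq_div_iff (by positivity), ← pow_add]
      congr 1
      omega
    rw [h1, ← hM]
    linarith
  linarith

lemma bb_lt_one {n j : ℕ} (hn : 2 ≤ n) (hj : j ≤ (Mseq n - 2) / 2) : bb n j ≤ 1 :=
  le_trans (le_trans (bb_le_cc n j) (cc_le (by omega) hj)) (by
    have h1 : ((2:ℝ)^n)⁻¹ ≤ (2^2 : ℝ)⁻¹ := by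
      apply inv_anti₀ (by positivity)
      exact pow_le_pow_right₀ (by norm_num) hn
    have h2 : ((2:ℝ)^(n+1))⁻¹ ≤ (2^3 : ℝ)⁻¹ := by
      apply inv_anti₀ (by positivity)
      exact pow_le_pow_right₀ (by norm_num) (by omega)
    norm_num at h1 h2 ⊢
    linarith)

end Aux
/-! ### The plateau structure of `h` -/

/-- `y` lies in a plateau of level `n`. -/
def InPl (n : ℕ) (y : ℝ) : Prop :=
  ∃ j, 1 ≤ j ∧ j ≤ (Mseq n - 2) / 2 ∧ y ∈ Set.Ico (bb n j) (cc n j)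

/-- The value of `h` on plateaus of level `n`. -/
def vv (lam : ℕ → ℝ) (q : ℝ) (n : ℕ) : ℝ :=
  ((2 : ℝ) ^ n)⁻¹ * LamSum lam (Mseq n) ^ (-(1 / q))

section Aux2

variable {lam : ℕ → ℝ} {p q : ℝ}

lemma hfun_pl (n : ℕ) (y : ℝ) :
    hfun lam q n y = if InPl n y then vv lam q n else 0 := rfl

lemma inPl_bounds {n : ℕ} {y : ℝ} (hn : 1 ≤ n) (h : InPl n y) :
    ((2:ℝ) ^ n)⁻¹ ≤ y ∧ y < ((2:ℝ) ^ n)⁻¹ + ((2:ℝ) ^ (n+1))⁻¹ := by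
  obtain ⟨j, hj1, hj2, hy1, hy2⟩ := h
  exact ⟨le_trans (inv_le_bb hj1) hy1, lt_of_lt_of_le hy2 (cc_le hn hj2)⟩

lemma inPl_unique {n n' : ℕ} {y : ℝ} (hn : 2 ≤ n) (hn' : 2 ≤ n')
    (h : InPl n y) (h' : InPl n' y) : n = n' := by
  by_contra hne
  have key : ∀ a b : ℕ, 1 ≤ a → a < b → InPl a y → InPl b y → False := by
    intro a b ha hab hA hB
    have h1 := (inPl_bounds ha hA).1
    have h2 := (inPl_bounds (by omega) hB).2
    have e1 : ((2:ℝ)^b)⁻¹ ≤ ((2:ℝ)^(a+1))⁻¹ :=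
      inv_anti₀ (by positivity) (pow_le_pow_right₀ (by norm_num) (by omega))
    have e2 : ((2:ℝ)^(b+1))⁻¹ ≤ ((2:ℝ)^(a+2))⁻¹ :=
      inv_anti₀ (by positivity) (pow_le_pow_right₀ (by norm_num) (by omega))
    have e3 : ((2:ℝ)^(a+1))⁻¹ + ((2:ℝ)^(a+2))⁻¹ ≤ ((2:ℝ)^a)⁻¹ := by
      have hpa : (0:ℝ) < 2^a := by positivity
      rw [pow_succ, pow_succ, pow_succ]
      rw [mul_inv, mul_inv, mul_inv]
      have : (0:ℝ) < (2^a)⁻¹ := by positivity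
      nlinarith
    linarith
  rcases lt_or_gt_of_ne hne with hlt | hgt
  · exact key n n' (by omega) hlt h h'
  · exact key n' n (by omega) hgt h' h

lemma hh_eq_of_inPl {n : ℕ} {y : ℝ} (hn : 2 ≤ n) (h : InPl n y) :
    hh lam q y = vv lam q n := by
  unfold hh
  rw [tsum_eq_single (n - 2)]
  · have : n - 2 + 2 = n := by omega
    rw [this, hfun_pl, if_pos h]
  · intro c hc
    rw [hfun_pl]
    apply if_neg
    intro hcpl
    have := inPl_unique (by omega) hn hcpl h
    omega

lemma hh_eq_zero' {y : ℝ} (h : ∀ n, 2 ≤ n → ¬ InPl n y) : hh lam q y = 0 := by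
  unfold hh
  have : ∀ c : ℕ, hfun lam q (c + 2) y = 0 := by
    intro c
    rw [hfun_pl]
    exact if_neg (h (c+2) (by omega))
  simp [this]

lemma vv_nonneg (hlam : WatermanSeq lam) (n : ℕ) : 0 ≤ vv lam q n := by
  unfold vv
  have := lamSum_nonneg hlam (Mseq n)
  positivity

lemma vv_pos (hlam : WatermanSeq lam) {n : ℕ} (hn : 2 ≤ n) : 0 < vv lam q n := by
  unfold vv
  have h1 : 0 < LamSum lam (Mseq n) := lamSum_pos hlam (by have := mseq_ge n hn; omega)
  have := Real.rpow_pos_of_pos h1 (-(1/q))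
  positivity

lemma hh_nonneg (hlam : WatermanSeq lam) (y : ℝ) : 0 ≤ hh lam q y := by
  unfold hh
  apply tsum_nonneg
  intro c
  rw [hfun_pl]
  split
  · exact vv_nonneg hlam _
  · exact le_refl 0

lemma vv_le_inv (hlam : WatermanSeq lam) (hq : 1 < q) {n : ℕ} (hn : 2 ≤ n) :
    vv lam q n ≤ ((2:ℝ) ^ n)⁻¹ := by
  unfold vv
  have h1 : 1 ≤ LamSum lam (Mseq n) := one_le_lamSum hlam (by have := mseq_ge n hn; omega)
  have h2 : LamSum lam (Mseq n) ^ (-(1/q)) ≤ 1 :=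
    Real.rpow_le_one_of_one_le_of_nonpos h1 (neg_nonpos.2 (by positivity))
  calc ((2:ℝ)^n)⁻¹ * LamSum lam (Mseq n) ^ (-(1/q)) ≤ ((2:ℝ)^n)⁻¹ * 1 := by
        apply mul_le_mul_of_nonneg_left h2 (by positivity)
  _ = ((2:ℝ)^n)⁻¹ := mul_one _

lemma vv_anti (hlam : WatermanSeq lam) (hq : 1 < q) {n n' : ℕ} (hn : 2 ≤ n) (h : n ≤ n') :
    vv lam q n' ≤ vv lam q n := by
  unfold vv
  have hMn : 1 ≤ Mseq n := by have := mseq_ge n hn; omega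
  have hL : LamSum lam (Mseq n) ≤ LamSum lam (Mseq n') :=
    lamSum_mono hlam (Nat.pow_le_pow_right (by norm_num) (by omega))
  have hLpos : 0 < LamSum lam (Mseq n) := lamSum_pos hlam hMn
  have h1 : LamSum lam (Mseq n') ^ (-(1/q)) ≤ LamSum lam (Mseq n) ^ (-(1/q)) := by
    rw [Real.rpow_neg (by linarith), Real.rpow_neg hLpos.le]
    apply inv_anti₀ (Real.rpow_pos_of_pos hLpos _)
    exact Real.rpow_le_rpow hLpos.le hL (by positivity)
  have h2 : ((2:ℝ)^n')⁻¹ ≤ ((2:ℝ)^n)⁻¹ :=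
    inv_anti₀ (by positivity) (pow_le_pow_right₀ (by norm_num) h)
  apply mul_le_mul h2 h1 (Real.rpow_nonneg (lamSum_nonneg hlam _) _) (by positivity)

lemma hh_cases (hlam : WatermanSeq lam) (y : ℝ) :
    (∃ n, 2 ≤ n ∧ InPl n y ∧ hh lam q y = vv lam q n) ∨ hh lam q y = 0 := by
  by_cases h : ∃ n, 2 ≤ n ∧ InPl n y
  · obtain ⟨n, hn, hpl⟩ := h
    exact Or.inl ⟨n, hn, hpl, hh_eq_of_inPl hn hpl⟩
  · push_neg at h
    exact Or.inr (hh_eq_zero' h)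

end Aux2
/-- The breakpoints of `h` at level `n`. -/
def Brk (n : ℕ) : Finset ℝ :=
  (Finset.Icc 1 ((Mseq n - 2) / 2)).image (bb n) ∪ (Finset.Icc 1 ((Mseq n - 2) / 2)).image (cc n)

section Aux3

variable {lam : ℕ → ℝ} {p q : ℝ}

lemma brk_card (n : ℕ) : (Brk n).card ≤ Mseq n := by
  have h1 : (Brk n).card ≤ ((Finset.Icc 1 ((Mseq n - 2) / 2)).image (bb n)).card
      + ((Finset.Icc 1 ((Mseq n - 2) / 2)).image (cc n)).card := Finset.card_union_le _ _
  have h2 : ((Finset.Icc 1 ((Mseq n - 2) / 2)).image (bb n)).card ≤ (Mseq n - 2) / 2 := by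
    apply le_trans (Finset.card_image_le)
    simp [Nat.card_Icc]
  have h3 : ((Finset.Icc 1 ((Mseq n - 2) / 2)).image (cc n)).card ≤ (Mseq n - 2) / 2 := by
    apply le_trans (Finset.card_image_le)
    simp [Nat.card_Icc]
  have : (Mseq n - 2) / 2 + (Mseq n - 2) / 2 ≤ Mseq n := by omega
  omega

/-- Key structural lemma: any interval on which `h` is not constant contains a breakpoint,
and the increment is controlled. -/
lemma exists_brk (hlam : WatermanSeq lam) (hq : 1 < q) {a b : ℝ} (hab : a ≤ b)
    (hne : hh lam q a ≠ hh lam q b) :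
    ∃ n t, 2 ≤ n ∧ t ∈ Brk n ∧ a < t ∧ t ≤ b ∧
      |hh lam q b - hh lam q a| ≤ vv lam q n := by
  rcases hh_cases (q := q) hlam b with ⟨n, hn, ⟨j, hj1, hj2, hbj⟩, hvb⟩ | hb0
  · -- b is in a plateau of level n
    refine ⟨n, bb n j, hn, ?_, ?_, hbj.1, ?_⟩
    · exact Finset.mem_union_left _ (Finset.mem_image_of_mem _ (Finset.mem_Icc.2 ⟨hj1, hj2⟩))
    · by_contra hle
      push_neg at hle
      have hapl : InPl n a := ⟨j, hj1, hj2, hle, lt_of_le_of_lt hab hbj.2⟩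
      exact hne (by rw [hh_eq_of_inPl hn hapl, hvb])
    · have ha0 : 0 ≤ hh lam q a := hh_nonneg hlam a
      have hale : hh lam q a ≤ vv lam q n := by
        rcases hh_cases (q := q) hlam a with ⟨n', hn', hpl', hva⟩ | ha0'
        · have hnn' : n ≤ n' := by
            by_contra hlt
            push_neg at hlt
            have h1 := (inPl_bounds (by omega : 1 ≤ n') hpl').1
            have h2 := (inPl_bounds (by omega : 1 ≤ n) ⟨j, hj1, hj2, hbj⟩).2
            have e1 : ((2:ℝ)^n)⁻¹ + ((2:ℝ)^(n+1))⁻¹ ≤ ((2:ℝ)^(n'+1))⁻¹ + ((2:ℝ)^(n'+2))⁻¹ := by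
              gcongr ?_ + ?_ <;>
                exact inv_anti₀ (by positivity) (pow_le_pow_right₀ (by norm_num) (by omega))
            have e3 : ((2:ℝ)^(n'+1))⁻¹ + ((2:ℝ)^(n'+2))⁻¹ ≤ ((2:ℝ)^n')⁻¹ := by
              have hpa : (0:ℝ) < 2^n' := by positivity
              rw [pow_succ, pow_succ, pow_succ, mul_inv, mul_inv, mul_inv]
              have : (0:ℝ) < (2^n')⁻¹ := by positivity
              nlinarith
            linarith
          rw [hva]
          exact vv_anti hlam hq hn hnn'
        · rw [ha0']
          exact (vv_pos hlam hn).le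
      rw [hvb, abs_of_nonneg (by linarith)]
      linarith
  · -- h b = 0, so h a ≠ 0
    have hane : hh lam q a ≠ 0 := by rw [hb0] at hne; exact hne
    rcases hh_cases (q := q) hlam a with ⟨n, hn, ⟨j, hj1, hj2, haj⟩, hva⟩ | ha0
    · refine ⟨n, cc n j, hn, ?_, haj.2, ?_, ?_⟩
      · exact Finset.mem_union_right _ (Finset.mem_image_of_mem _ (Finset.mem_Icc.2 ⟨hj1, hj2⟩))
      · by_contra hle
        push_neg at hle
        have hbpl : InPl n b := ⟨j, hj1, hj2, le_trans haj.1 hab, hle⟩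
        exact hne (by rw [hh_eq_of_inPl hn hbpl, hva])
      · rw [hb0, hva, zero_sub, abs_neg, abs_of_nonneg (vv_nonneg hlam n)]
    · exact absurd ha0 hane

lemma geom_aux : ∀ B : ℕ, ∑ n ∈ Finset.Icc 1 B, ((2:ℝ)^n)⁻¹ = 1 - ((2:ℝ)^B)⁻¹ := by
  intro B
  induction B with
  | zero => simp
  | succ B ih =>
    rw [Finset.sum_Icc_succ_top (by omega : 1 ≤ B + 1), ih]
    have : (0:ℝ) < 2^B := by positivity
    field_simp
    ring

lemma sum_inv_pow_le {N : Finset ℕ} (h : ∀ n ∈ N, 1 ≤ n) :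
    ∑ n ∈ N, ((2:ℝ)^n)⁻¹ ≤ 1 := by
  set B := N.sup id with hB
  have hsub : N ⊆ Finset.Icc 1 B := by
    intro n hn
    exact Finset.mem_Icc.2 ⟨h n hn, Finset.le_sup (f := id) hn⟩
  calc ∑ n ∈ N, ((2:ℝ)^n)⁻¹ ≤ ∑ n ∈ Finset.Icc 1 B, ((2:ℝ)^n)⁻¹ :=
        Finset.sum_le_sum_of_subset_of_nonneg hsub (fun i _ _ => by positivity)
  _ = 1 - ((2:ℝ)^B)⁻¹ := geom_aux B
  _ ≤ 1 := by
      simp only [sub_le_self_iff]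
      positivity

/-- The central estimate: the `q`-`Λ`-variation of `h` is at most `1`. -/
lemma variation_hh_le_one (hlam : WatermanSeq lam) (hq : 1 < q) :
    variation lam q (hh lam q) ≤ 1 := by
  refine iSup_le fun m => iSup_le fun a => iSup_le fun b => iSup_le fun hno => ?_
  rw [ENNReal.ofReal_le_one]
  have hq0 : (0:ℝ) < q := by linarith
  unfold vSum
  have hterm : ∀ i, 0 ≤ |hh lam q (b i) - hh lam q (a i)| ^ q / lam (i+1) :=
    fun i => div_nonneg (Real.rpow_nonneg (abs_nonneg _) q) (hlam.1 _).le
  refine Real.rpow_le_one (Finset.sum_nonneg fun i _ => hterm i) ?_ (by positivity)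
  -- reduce to the sum over intervals where h is non-constant
  set g := hh lam q with hg
  have hS : ∑ i ∈ (Finset.range m).filter (fun i => g (b i) ≠ g (a i)),
      (fun i => |g (b i) - g (a i)| ^ q / lam (i+1)) i
      = ∑ i ∈ Finset.range m, |g (b i) - g (a i)| ^ q / lam (i+1) := by
    apply Finset.sum_filter_of_ne
    intro i _ hne heq
    rw [heq, sub_self, abs_zero, Real.zero_rpow (ne_of_gt hq0), zero_div] at hne
    exact hne rfl
  rw [← hS]
  set S := (Finset.range m).filter (fun i => g (b i) ≠ g (a i)) with hSdef
  -- choose breakpoints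
  have key : ∀ i : ℕ, ∃ nt : ℕ × ℝ, 2 ≤ nt.1 ∧ (i ∈ S →
      nt.2 ∈ Brk nt.1 ∧ a i < nt.2 ∧ nt.2 ≤ b i ∧ |g (b i) - g (a i)| ≤ vv lam q nt.1) := by
    intro i
    by_cases hi : i ∈ S
    · have him : i < m := Finset.mem_range.1 (Finset.mem_filter.1 hi).1
      have hne : g (b i) ≠ g (a i) := (Finset.mem_filter.1 hi).2
      have hab : a i ≤ b i := (hno.1 i him).2.1
      obtain ⟨n, t, hn, ht, h1, h2, h3⟩ := exists_brk hlam hq hab (Ne.symm hne)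
      exact ⟨(n, t), hn, fun _ => ⟨ht, h1, h2, h3⟩⟩
    · exact ⟨(2, 0), le_refl 2, fun h => absurd h hi⟩
  choose nt hnt2 hntc using key
  set nl : ℕ → ℕ := fun i => (nt i).1 with hnl
  set tl : ℕ → ℝ := fun i => (nt i).2 with htl
  -- partition by level
  rw [← Finset.sum_fiberwise_of_maps_to (g := nl) (t := S.image nl)
    (fun i hi => Finset.mem_image_of_mem nl hi)]
  -- bound each fiber
  have inner : ∀ n ∈ S.image nl,
      ∑ i ∈ S.filter (fun i => nl i = n), |g (b i) - g (a i)| ^ q / lam (i+1)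
        ≤ ((2:ℝ)^n)⁻¹ := by
    intro n hnim
    obtain ⟨i0, hi0S, hi0⟩ := Finset.mem_image.1 hnim
    have hn2 : 2 ≤ n := hi0 ▸ hnt2 i0
    set Sn := S.filter (fun i => nl i = n) with hSn
    have hLpos : 0 < LamSum lam (Mseq n) :=
      lamSum_pos hlam (by have := mseq_ge n hn2; omega)
    have step1 : ∑ i ∈ Sn, |g (b i) - g (a i)| ^ q / lam (i+1)
        ≤ ∑ i ∈ Sn, vv lam q n ^ q * (1 / lam (i+1)) := by
      apply Finset.sum_le_sum
      intro i hi
      obtain ⟨hiS, hieq⟩ := Finset.mem_filter.1 hi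
      have hieq' : (nt i).1 = n := hieq
      have hbd := ((hntc i hiS).2.2.2)
      rw [hieq'] at hbd
      rw [div_eq_mul_one_div]
      apply mul_le_mul_of_nonneg_right _ (by have := hlam.1 (i+1); positivity)
      exact Real.rpow_le_rpow (abs_nonneg _) hbd hq0.le
    have hcard : Sn.card ≤ Mseq n := by
      have hinj : Set.InjOn tl Sn := by
        intro i hi j hj hij
        by_contra hne
        have hiS := (Finset.mem_filter.1 hi).1
        have hjS := (Finset.mem_filter.1 hj).1
        have him : i < m := Finset.mem_range.1 (Finset.mem_filter.1 hiS).1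
        have hjm : j < m := Finset.mem_range.1 (Finset.mem_filter.1 hjS).1
        have hci := hntc i hiS
        have hcj := hntc j hjS
        have h1i : a i < tl i := hci.2.1
        have h2i : tl i ≤ b i := hci.2.2.1
        have h1j : a j < tl j := hcj.2.1
        have h2j : tl j ≤ b j := hcj.2.2.1
        rcases hno.2 i him j hjm hne with hc | hc
        · rw [hij] at h2i; linarith
        · rw [← hij] at h2j; linarith
      have hmaps : ∀ i ∈ Sn, tl i ∈ Brk n := by
        intro i hi
        obtain ⟨hiS, hieq⟩ := Finset.mem_filter.1 hi
        have hieq' : (nt i).1 = n := hieq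
        have := (hntc i hiS).1
        rwa [hieq'] at this
      exact le_trans (Finset.card_le_card_of_injOn tl hmaps hinj) (brk_card n)
    have step2 : ∑ i ∈ Sn, vv lam q n ^ q * (1 / lam (i+1))
        = vv lam q n ^ q * ∑ i ∈ Sn, 1 / lam (i+1) := by rw [Finset.mul_sum]
    have step3 : vv lam q n ^ q * ∑ i ∈ Sn, 1 / lam (i+1)
        ≤ vv lam q n ^ q * LamSum lam (Mseq n) := by
      apply mul_le_mul_of_nonneg_left (sum_inv_lam_le hlam hcard)
      exact Real.rpow_nonneg (vv_nonneg hlam n) q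
    have step4 : vv lam q n ^ q * LamSum lam (Mseq n) = (((2:ℝ)^n)⁻¹) ^ q := by
      unfold vv
      rw [Real.mul_rpow (by positivity) (Real.rpow_nonneg hLpos.le _),
          ← Real.rpow_mul hLpos.le]
      have hexp : -(1/q) * q = -1 := by field_simp
      rw [hexp, Real.rpow_neg_one]
      field_simp
    have step5 : (((2:ℝ)^n)⁻¹) ^ q ≤ ((2:ℝ)^n)⁻¹ := by
      have h1 : (0:ℝ) < ((2:ℝ)^n)⁻¹ := by positivity
      have h2 : ((2:ℝ)^n)⁻¹ ≤ 1 := by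
        rw [inv_le_one_iff₀]
        right
        exact one_le_pow₀ (by norm_num)
      calc (((2:ℝ)^n)⁻¹) ^ q ≤ (((2:ℝ)^n)⁻¹) ^ (1:ℝ) :=
            Real.rpow_le_rpow_of_exponent_ge h1 h2 (by linarith)
      _ = ((2:ℝ)^n)⁻¹ := Real.rpow_one _
    calc ∑ i ∈ Sn, |g (b i) - g (a i)| ^ q / lam (i+1)
        ≤ ∑ i ∈ Sn, vv lam q n ^ q * (1 / lam (i+1)) := step1
    _ = vv lam q n ^ q * ∑ i ∈ Sn, 1 / lam (i+1) := step2
    _ ≤ vv lam q n ^ q * LamSum lam (Mseq n) := step3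
    _ = (((2:ℝ)^n)⁻¹) ^ q := step4
    _ ≤ ((2:ℝ)^n)⁻¹ := step5
  calc ∑ n ∈ S.image nl, ∑ i ∈ S.filter (fun i => nl i = n), |g (b i) - g (a i)| ^ q / lam (i+1)
      ≤ ∑ n ∈ S.image nl, ((2:ℝ)^n)⁻¹ := Finset.sum_le_sum inner
  _ ≤ 1 := sum_inv_pow_le (fun n hn => by
      obtain ⟨i0, _, hi0⟩ := Finset.mem_image.1 hn
      have hi0' : (nt i0).1 = n := hi0
      have := hnt2 i0
      omega)

end Aux3
section Aux4

variable {lam : ℕ → ℝ} {p q s : ℝ} {f : ℝ → ℝ}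

lemma ofReal_vSum_le_variation {m : ℕ} {a b : ℕ → ℝ} (h : NonOverlapping m a b) :
    ENNReal.ofReal (vSum lam s f m a b) ≤ variation lam s f :=
  le_iSup_of_le m (le_iSup_of_le a (le_iSup_of_le b (le_iSup_of_le h le_rfl)))

lemma vSum_nonneg (hlam : WatermanSeq lam) {m : ℕ} {a b : ℕ → ℝ} :
    0 ≤ vSum lam s f m a b := by
  unfold vSum
  apply Real.rpow_nonneg
  apply Finset.sum_nonneg
  intro i _
  exact div_nonneg (Real.rpow_nonneg (abs_nonneg _) s) (hlam.1 _).le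

lemma vSum_le_toReal (hlam : WatermanSeq lam) {m : ℕ} {a b : ℕ → ℝ}
    (h : NonOverlapping m a b) (hfin : variation lam s f ≠ ⊤) :
    vSum lam s f m a b ≤ (variation lam s f).toReal := by
  have h1 := ofReal_vSum_le_variation (lam := lam) (s := s) (f := f) h
  exact (ENNReal.ofReal_le_iff_le_toReal hfin).1 h1

lemma abs_incr_le_toReal (hlam : WatermanSeq lam) (hs : s ≠ 0) {x y : ℝ}
    (hx : 0 ≤ x) (hxy : x ≤ y) (hy : y ≤ 1) (hfin : variation lam s f ≠ ⊤) :
    |f y - f x| ≤ (variation lam s f).toReal := by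
  have hno : NonOverlapping 1 (fun _ => x) (fun _ => y) := by
    constructor
    · intro i _; exact ⟨hx, hxy, hy⟩
    · intro i hi j hj hij; omega
  have := vSum_le_toReal (f := f) hlam hno hfin
  unfold vSum at this
  rw [Finset.sum_range_one, hlam.2.2.1, div_one, ← Real.rpow_mul (abs_nonneg _),
    mul_one_div, div_self hs, Real.rpow_one] at this
  exact this

/-! ### The sequence `rr` -/

lemma rr_mem (i : ℕ) : ((2:ℝ) ^ (i/2+2))⁻¹ ≤ rr i ∧
    rr i ≤ ((2:ℝ) ^ (i/2+2))⁻¹ + ((2:ℝ) ^ (i/2+2+1))⁻¹ := by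
  have hK : 1 ≤ (Mseq (i/2+2) - 2) / 2 := by
    have := mseq_ge (i/2+2) (by omega)
    omega
  unfold rr
  split
  · exact ⟨(inv_lt_cc hK).le, cc_le (by omega) le_rfl⟩
  · exact ⟨inv_le_bb hK, le_trans (bb_le_cc _ _) (cc_le (by omega) le_rfl)⟩

lemma rr_pos (i : ℕ) : 0 < rr i :=
  lt_of_lt_of_le (by positivity) (rr_mem i).1

lemma rr_succ_le (i : ℕ) : rr (i + 1) ≤ rr i := by
  rcases Nat.even_or_odd i with ⟨k, hk⟩ | ⟨k, hk⟩
  · -- i = 2k even : rr (2k+1) = bb ≤ cc = rr (2k)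
    subst hk
    have h1 : (k + k) % 2 = 0 := by omega
    have h2 : (k + k + 1) % 2 = 1 := by omega
    have h3 : (k + k) / 2 = k := by omega
    have h4 : (k + k + 1) / 2 = k := by omega
    unfold rr
    rw [if_pos h1, if_neg (by omega), h3, h4]
    exact bb_le_cc _ _
  · -- i = 2k+1 odd
    subst hk
    have h3 : (2*k + 1) / 2 = k := by omega
    have h4 : (2*k + 1 + 1) / 2 = k + 1 := by omega
    have hub := (rr_mem (2*k+1+1)).2
    have hlb := (rr_mem (2*k+1)).1
    rw [h4] at hub
    rw [h3] at hlb
    have key : ((2:ℝ)^(k+1+2))⁻¹ + ((2:ℝ)^(k+1+2+1))⁻¹ ≤ ((2:ℝ)^(k+2))⁻¹ := by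
      have hpa : (0:ℝ) < 2^(k+2) := by positivity
      have e1 : ((2:ℝ)^(k+3)) = 2 * 2^(k+2) := by ring
      have e2 : ((2:ℝ)^(k+4)) = 4 * 2^(k+2) := by ring
      rw [show k+1+2 = k+3 by ring, show k+1+2+1 = k+4 by ring, e1, e2,
        mul_inv, mul_inv]
      nlinarith [inv_pos.2 hpa]
    linarith
lemma rr_anti : Antitone rr :=
  antitone_nat_of_succ_le rr_succ_le

lemma rr_le_one (i : ℕ) : rr i ≤ 1 := by
  have h0 := (rr_mem 0).2
  have := rr_anti (Nat.zero_le i)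
  have e1 : ((2:ℝ)^(0/2+2))⁻¹ = 1/4 := by norm_num
  have e2 : ((2:ℝ)^(0/2+2+1))⁻¹ = 1/8 := by norm_num
  rw [e1, e2] at h0
  linarith

lemma J_nonOverlapping (N : ℕ) :
    NonOverlapping N (fun i => rr (i+1)) (fun i => rr i) := by
  constructor
  · intro i _
    exact ⟨(rr_pos (i+1)).le, rr_succ_le i, rr_le_one i⟩
  · intro i _ j _ hij
    rcases lt_or_gt_of_ne hij with h | h
    · exact Or.inr (rr_anti (by omega : i + 1 ≤ j))
    · exact Or.inl (rr_anti (by omega : j + 1 ≤ i))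

end Aux4
section Aux5

variable {lam : ℕ → ℝ} {p q : ℝ} {f : ℝ → ℝ}

/-- Hölder estimate for the partial sums over the intervals `J_i`. -/
lemma sum_T_le (hlam : WatermanSeq lam) (hp : 1 < p) (hq : 1 < q)
    (hpq : 1 / p + 1 / q = 1) (hfinp : variation lam p f ≠ ⊤)
    (hfinq : variation lam q (hh lam q) ≠ ⊤) (N : ℕ) :
    ∑ i ∈ Finset.range N, |incrJ f (i+1)| * |incrJ (hh lam q) (i+1)| / lam (i+1)
      ≤ (variation lam p f).toReal * (variation lam q (hh lam q)).toReal := by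
  have hp0 : (0:ℝ) < p := by linarith
  have hq0 : (0:ℝ) < q := by linarith
  have hcje : Real.HolderConjugate p q :=
    ⟨by rw [inv_one, ← one_div, ← one_div]; exact hpq, hp0, hq0⟩
  set F : ℕ → ℝ := fun i => |incrJ f (i+1)| / lam (i+1) ^ (1/p) with hF
  set G : ℕ → ℝ := fun i => |incrJ (hh lam q) (i+1)| / lam (i+1) ^ (1/q) with hG
  have hlpos : ∀ i : ℕ, (0:ℝ) < lam (i+1) := fun i => hlam.1 (i+1)
  have hFG : ∀ i, F i * G i = |incrJ f (i+1)| * |incrJ (hh lam q) (i+1)| / lam (i+1) := by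
    intro i
    rw [hF, hG]
    simp only
    rw [div_mul_div_comm, ← Real.rpow_add (hlpos i), hpq, Real.rpow_one]
  have h1 : ∑ i ∈ Finset.range N, F i * G i
      ≤ (∑ i ∈ Finset.range N, |F i| ^ p) ^ (1/p) * (∑ i ∈ Finset.range N, |G i| ^ q) ^ (1/q) :=
    Real.inner_le_Lp_mul_Lq (Finset.range N) F G hcje
  have hFabs : ∀ i, |F i| = F i := fun i => abs_of_nonneg (by
    apply div_nonneg (abs_nonneg _) (Real.rpow_nonneg (hlpos i).le _))
  have hGabs : ∀ i, |G i| = G i := fun i => abs_of_nonneg (by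
    apply div_nonneg (abs_nonneg _) (Real.rpow_nonneg (hlpos i).le _))
  have hFp : ∀ i, |F i| ^ p = |incrJ f (i+1)| ^ p / lam (i+1) := by
    intro i
    rw [hFabs i, hF]
    simp only
    rw [Real.div_rpow (abs_nonneg _) (Real.rpow_nonneg (hlpos i).le _),
      ← Real.rpow_mul (hlpos i).le, one_div_mul_cancel (ne_of_gt hp0), Real.rpow_one]
  have hGq : ∀ i, |G i| ^ q = |incrJ (hh lam q) (i+1)| ^ q / lam (i+1) := by
    intro i
    rw [hGabs i, hG]
    simp only
    rw [Real.div_rpow (abs_nonneg _) (Real.rpow_nonneg (hlpos i).le _),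
      ← Real.rpow_mul (hlpos i).le, one_div_mul_cancel (ne_of_gt hq0), Real.rpow_one]
  have hvP : (∑ i ∈ Finset.range N, |F i| ^ p) ^ (1/p)
      = vSum lam p f N (fun i => rr (i+1)) (fun i => rr i) := by
    unfold vSum
    congr 1
    apply Finset.sum_congr rfl
    intro i _
    rw [hFp i]
    congr 1
  have hvQ : (∑ i ∈ Finset.range N, |G i| ^ q) ^ (1/q)
      = vSum lam q (hh lam q) N (fun i => rr (i+1)) (fun i => rr i) := by
    unfold vSum
    congr 1
    apply Finset.sum_congr rfl
    intro i _
    rw [hGq i]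
    congr 1
  calc ∑ i ∈ Finset.range N, |incrJ f (i+1)| * |incrJ (hh lam q) (i+1)| / lam (i+1)
      = ∑ i ∈ Finset.range N, F i * G i := by
        apply Finset.sum_congr rfl
        intro i _
        rw [hFG i]
  _ ≤ (∑ i ∈ Finset.range N, |F i| ^ p) ^ (1/p) * (∑ i ∈ Finset.range N, |G i| ^ q) ^ (1/q) := h1
  _ = vSum lam p f N (fun i => rr (i+1)) (fun i => rr i)
      * vSum lam q (hh lam q) N (fun i => rr (i+1)) (fun i => rr i) := by rw [hvP, hvQ]
  _ ≤ (variation lam p f).toReal * (variation lam q (hh lam q)).toReal := by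
      apply mul_le_mul (vSum_le_toReal hlam (J_nonOverlapping N) hfinp)
        (vSum_le_toReal hlam (J_nonOverlapping N) hfinq)
        (vSum_nonneg hlam) (ENNReal.toReal_nonneg)

end Aux5
/-- `L_{(n_k)}` is bounded on `ΛBV^{(p)}` with bound `2`:
`|L_{(n_k)}(f)| ≤ ‖f‖_{Λ,p}·(1 + ‖h‖_{Λ,q}) ≤ 2‖f‖_{Λ,p}`, where
`‖f‖_{Λ,p} = |f(0)| + V_{Λ,p}(f)`. -/
theorem stmt11 (lam : ℕ → ℝ) (hlam : WatermanSeq lam) (p q : ℝ)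
    (hp : 1 < p) (hq : 1 < q) (hpq : 1 / p + 1 / q = 1)
    (nseq : ℕ → ℕ) (hmono : StrictMono nseq) (hone : 1 ≤ nseq 1)
    (f : ℝ → ℝ) (hf : variation lam p f < ⊤) :
    |Lfun lam q nseq f| ≤ (|f 0| + (variation lam p f).toReal) *
      (1 + (|hh lam q 0| + (variation lam q (hh lam q)).toReal)) ∧
    (|f 0| + (variation lam p f).toReal) *
      (1 + (|hh lam q 0| + (variation lam q (hh lam q)).toReal))
      ≤ 2 * (|f 0| + (variation lam p f).toReal) := by
  have hp0 : (0:ℝ) < p := by linarith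
  have hq0 : (0:ℝ) < q := by linarith
  have hh0 : hh lam q 0 = 0 := by
    apply hh_eq_zero'
    intro n hn hpl
    have h1 := (inPl_bounds (by omega : 1 ≤ n) hpl).1
    have h2 : (0:ℝ) < ((2:ℝ)^n)⁻¹ := by positivity
    linarith
  have hvarq_le : variation lam q (hh lam q) ≤ 1 := variation_hh_le_one hlam hq
  have hfinq : variation lam q (hh lam q) ≠ ⊤ :=
    ne_top_of_le_ne_top ENNReal.one_ne_top hvarq_le
  have hfinp : variation lam p f ≠ ⊤ := hf.ne
  set Vp := (variation lam p f).toReal with hVp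
  set Vq := (variation lam q (hh lam q)).toReal with hVq
  have hVp0 : 0 ≤ Vp := ENNReal.toReal_nonneg
  have hVq0 : 0 ≤ Vq := ENNReal.toReal_nonneg
  have hVq1 : Vq ≤ 1 := by
    calc Vq ≤ (1 : ℝ≥0∞).toReal := ENNReal.toReal_mono ENNReal.one_ne_top hvarq_le
    _ = 1 := by simp
  set T : ℕ → ℝ := fun j => |incrJ f j| * |incrJ (hh lam q) j| / lam j with hT
  have hTnn : ∀ j, 0 ≤ T j :=
    fun j => div_nonneg (mul_nonneg (abs_nonneg _) (abs_nonneg _)) (hlam.1 j).le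
  have hTsum : ∀ N, ∑ i ∈ Finset.range N, T (i+1) ≤ Vp * Vq := by
    intro N
    simpa [hT] using sum_T_le hlam hp hq hpq hfinp hfinq N
  set g : ℕ → ℝ := fun m => T (2*m+1) + T (2*m+2) with hgdef
  have hreindex : ∀ N, ∑ m ∈ Finset.range N, g m = ∑ i ∈ Finset.range (2*N), T (i+1) := by
    intro N
    induction N with
    | zero => simp
    | succ N ih =>
      rw [Finset.sum_range_succ, ih, show 2*(N+1) = 2*N+1+1 by ring,
        Finset.sum_range_succ, Finset.sum_range_succ]
      simp only [hgdef]
      have e : 2*N+1+1 = 2*N+2 := by ring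
      rw [e]
      ring
  have hgnn : ∀ m, 0 ≤ g m := fun m => add_nonneg (hTnn _) (hTnn _)
  have hgsum : ∀ N, ∑ m ∈ Finset.range N, g m ≤ Vp * Vq :=
    fun N => (hreindex N) ▸ hTsum (2*N)
  have hgsummable : Summable g := summable_of_sum_range_le hgnn hgsum
  have hgtsum : ∑' m, g m ≤ Vp * Vq := Real.tsum_le_of_sum_range_le hgnn hgsum
  have hLle : ∀ m, |Lterm lam q nseq f m| ≤ g m := by
    intro m
    unfold Lterm
    have hicc : (Finset.Icc 1 2 : Finset ℕ) = {1, 2} := by decide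
    rw [hicc, Finset.sum_pair (by norm_num : (1:ℕ) ≠ 2), abs_mul]
    have hps : |psgn nseq (m+1)| ≤ 1 := by
      unfold psgn
      split
      · rw [abs_pow, abs_neg, abs_one, one_pow]
      · simp
    have habs : ∀ i : ℕ,
        |(-1:ℝ)^i * incrJ f (2*m+i) * |incrJ (hh lam q) (2*m+i)| / lam (2*m+i)|
          = T (2*m+i) := by
      intro i
      rw [hT]
      simp only
      rw [abs_div, abs_mul, abs_mul, abs_pow, abs_neg, abs_one, one_pow, one_mul, abs_abs,
        abs_of_pos (hlam.1 _)]
    refine le_trans (mul_le_mul hps (abs_add_le _ _) (abs_nonneg _) zero_le_one) ?_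
    rw [one_mul, habs 1, habs 2]
  have habs_summable : Summable (fun m => |Lterm lam q nseq f m|) :=
    Summable.of_nonneg_of_le (fun m => abs_nonneg _) hLle hgsummable
  have hLsummable : Summable (Lterm lam q nseq f) := habs_summable.of_abs
  have htsumabs : |∑' m, Lterm lam q nseq f m| ≤ ∑' m, |Lterm lam q nseq f m| := by
    have := norm_tsum_le_tsum_norm (f := Lterm lam q nseq f)
      (by simpa [Real.norm_eq_abs] using habs_summable)
    simpa [Real.norm_eq_abs] using this
  have htsum_le : ∑' m, |Lterm lam q nseq f m| ≤ ∑' m, g m :=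
    habs_summable.tsum_le_tsum hLle hgsummable
  have hJ' : |f (3/8 + 1/2^8) - f (3/8)| ≤ Vp :=
    abs_incr_le_toReal hlam (ne_of_gt hp0) (by norm_num) (by norm_num) (by norm_num) hfinp
  have hLfun : |Lfun lam q nseq f| ≤ Vp + Vp * Vq := by
    unfold Lfun
    refine le_trans (abs_add_le _ _) ?_
    exact add_le_add hJ' (le_trans (le_trans htsumabs htsum_le) hgtsum)
  rw [hh0, abs_zero]
  constructor
  · refine le_trans hLfun ?_
    nlinarith [mul_nonneg (abs_nonneg (f 0)) hVq0, abs_nonneg (f 0)]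
  · nlinarith [mul_nonneg (add_nonneg (abs_nonneg (f 0)) hVp0) (sub_nonneg.2 hVq1)]
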